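/- The weighted k-variance of the row representatives equals the sum of squared distances of the top-k left singular vectors to the subspace spanned by the D_row^{1/2}-scaled normalized partition vectors: S_k²(X) = Σ_{i=1}^k dist²(v_i, F), where F = Span{D_row^{1/2}w₁,...,D_row^{1/2}w_k} and w_a has coordinates 1/sqrt(Vol(R_a)) on R_a and 0 elsewhere, provided the partition (R₁,...,R_k) attains the minimum in the definition of S_k². -/

import Mathlib

open scoped RealInnerProductSpace

/-- Distance to a submodule when an orthogonal foot is known. -/
lemma infDist_eq_of_orth {E : Type*} [NormedAddCommGroup E] [InnerProductSpace ℝ E]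
    (F : Submodule ℝ E) (x p : E) (hp : p ∈ F)
    (horth : ∀ y ∈ F, ⟪x - p, y⟫ = 0) :
    Metric.infDist x (F : Set E) = ‖x - p‖ := by
  refine le_antisymm ((Metric.infDist_le_dist_of_mem hp).trans_eq (dist_eq_norm x p)) ?_
  rw [Metric.infDist_eq_iInf]
  have hne : Nonempty (F : Set E) := ⟨⟨0, F.zero_mem⟩⟩
  refine le_ciInf fun z => ?_
  obtain ⟨y, hy⟩ := z
  have hxy : x - y = (x - p) + (p - y) := by abel
  have hinner : ⟪x - p, p - y⟫ = 0 := horth _ (F.sub_mem hp hy)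
  have hsq : ‖x - y‖ ^ 2 = ‖x - p‖ ^ 2 + ‖p - y‖ ^ 2 := by
    rw [hxy, norm_add_sq_real, hinner]; ring
  have h1 : (0:ℝ) ≤ ‖x - p‖ := norm_nonneg _
  have h2 : (0:ℝ) ≤ ‖x - y‖ := norm_nonneg _
  have h3 : (0:ℝ) ≤ ‖p - y‖ ^ 2 := sq_nonneg _
  simp only [dist_eq_norm]
  nlinarith

lemma euclid_sum_apply {n : ℕ} {α : Type*} (s : Finset α)
    (g : α → EuclideanSpace ℝ (Fin n)) (i : Fin n) :
    (∑ a ∈ s, g a) i = ∑ a ∈ s, g a i := by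
  induction s using Finset.cons_induction with
  | empty => rfl
  | cons a s ha ih => rw [Finset.sum_cons, Finset.sum_cons, PiLp.add_apply, ih]

theorem weighted_k_variance_eq_sum_dist_sq {n k : ℕ}
    (d : Fin n → ℝ) (hd : ∀ i, 0 < d i)
    (v : Fin k → EuclideanSpace ℝ (Fin n))
    (hv : ∀ a b, ∑ i, v a i * v b i = if a = b then (1 : ℝ) else 0)
    (X : Matrix (Fin n) (Fin k) ℝ)
    (hX : ∀ i a, X i a = v a i / Real.sqrt (d i))
    (Svar : (Fin n → Fin k) → ℝ)
    (hSvar : ∀ g : Fin n → Fin k, Svar g =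
      ∑ a : Fin k, ∑ i ∈ Finset.univ.filter (fun i => g i = a), d i *
        (∑ b : Fin k, (X i b -
          (∑ j ∈ Finset.univ.filter (fun j => g j = a), d j * X j b) /
            (∑ j ∈ Finset.univ.filter (fun j => g j = a), d j)) ^ 2))
    (f : Fin n → Fin k) (hf : Function.Surjective f)
    (hmin : ∀ g : Fin n → Fin k, Svar f ≤ Svar g)
    (w : Fin k → EuclideanSpace ℝ (Fin n))
    (hw : ∀ a i, w a i = if f i = a then
      Real.sqrt (d i) / Real.sqrt (∑ j ∈ Finset.univ.filter (fun j => f j = a), d j) else 0) :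
    Svar f = ∑ a : Fin k,
      (Metric.infDist (v a) (Submodule.span ℝ (Set.range w) : Set (EuclideanSpace ℝ (Fin n)))) ^ 2 := by
  classical
  -- abbreviations
  set Vol : Fin k → ℝ := fun a => ∑ j ∈ Finset.univ.filter (fun j => f j = a), d j with hVol
  set m : Fin k → Fin k → ℝ := fun a b =>
    (∑ j ∈ Finset.univ.filter (fun j => f j = a), d j * X j b) / Vol a with hm
  set c : Fin k → Fin k → ℝ := fun a b => Real.sqrt (Vol a) * m a b with hc
  set p : Fin k → EuclideanSpace ℝ (Fin n) := fun b => ∑ a : Fin k, c a b • w a with hp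
  have hVolpos : ∀ a, 0 < Vol a := by
    intro a
    obtain ⟨i, hi⟩ := hf a
    exact Finset.sum_pos' (fun j _ => (hd j).le)
      ⟨i, Finset.mem_filter.mpr ⟨Finset.mem_univ i, hi⟩, hd i⟩
  have hsVol : ∀ a, Real.sqrt (Vol a) ≠ 0 := fun a =>
    ne_of_gt (Real.sqrt_pos.mpr (hVolpos a))
  have hsd : ∀ i, Real.sqrt (d i) ≠ 0 := fun i => ne_of_gt (Real.sqrt_pos.mpr (hd i))
  have hdsq : ∀ i, Real.sqrt (d i) * Real.sqrt (d i) = d i :=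
    fun i => Real.mul_self_sqrt (hd i).le
  have hVsq : ∀ a, Real.sqrt (Vol a) * Real.sqrt (Vol a) = Vol a :=
    fun a => Real.mul_self_sqrt (hVolpos a).le
  have hsX : ∀ i b, Real.sqrt (d i) * X i b = v b i := by
    intro i b; rw [hX, mul_comm, div_mul_cancel₀ _ (hsd i)]
  have hdX : ∀ j b, d j * X j b = Real.sqrt (d j) * v b j := by
    intro j b
    nth_rewrite 1 [← hdsq j]
    rw [mul_assoc, hsX]
  have hwa : ∀ a i, w a i = if f i = a then Real.sqrt (d i) / Real.sqrt (Vol a) else 0 := by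
    intro a i; rw [hw]
  -- inner product formula on EuclideanSpace
  have hinnerE : ∀ (x y : EuclideanSpace ℝ (Fin n)), ⟪x, y⟫ = ∑ i, x i * y i := by
    intro x y
    simp [PiLp.inner_apply, RCLike.inner_apply, conj_trivial]
    exact Finset.sum_congr rfl fun _ _ => mul_comm _ _
  -- coordinates of the projection
  have hpcoord : ∀ b i, p b i = Real.sqrt (d i) * m (f i) b := by
    intro b i
    have h1 : p b i = ∑ a : Fin k, c a b * w a i := by
      simp only [hp]
      rw [euclid_sum_apply]
      exact Finset.sum_congr rfl fun a _ => by rw [PiLp.smul_apply, smul_eq_mul]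
    rw [h1]
    have h2 : ∀ a, c a b * w a i =
        if f i = a then Real.sqrt (d i) * m (f i) b else 0 := by
      intro a
      rw [hwa]
      split_ifs with h
      · subst h
        simp only [hc]
        rw [div_eq_mul_inv]
        have h4 := hVsq (f i)
        have h5 := hsVol (f i)
        field_simp
      · simp
    simp_rw [h2]
    simp
  -- inner products of v with w
  have hvw : ∀ b a, ⟪v b, w a⟫ = c a b := by
    intro b a
    rw [hinnerE]
    have h1 : ∀ i, v b i * w a i =
        (if f i = a then Real.sqrt (d i) * v b i else 0) / Real.sqrt (Vol a) := by
      intro i; rw [hwa]; split_ifs with h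
      · ring
      · simp
    simp_rw [h1]
    rw [← Finset.sum_div, ← Finset.sum_filter]
    have h2 : Vol a * m a b =
        ∑ i ∈ Finset.univ.filter (fun i => f i = a), Real.sqrt (d i) * v b i := by
      simp only [hm]
      rw [mul_comm, div_mul_cancel₀ _ (ne_of_gt (hVolpos a))]
      exact Finset.sum_congr rfl fun j _ => hdX j b
    rw [← h2]
    simp only [hc]
    rw [div_eq_iff (hsVol a)]
    nth_rewrite 1 [← hVsq a]
    ring
  -- orthonormality of w
  have hww : ∀ a a', ⟪w a, w a'⟫ = if a = a' then (1:ℝ) else 0 := by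
    intro a a'
    rw [hinnerE]
    by_cases h : a = a'
    · subst h
      have h1 : ∀ i, w a i * w a i = (if f i = a then d i else 0) / Vol a := by
        intro i; rw [hwa]; split_ifs with hfi
        · rw [div_mul_div_comm, hdsq, hVsq]
        · simp
      simp_rw [h1]
      rw [← Finset.sum_div, ← Finset.sum_filter]
      rw [show (∑ i ∈ Finset.univ.filter (fun i => f i = a), d i) = Vol a from rfl]
      rw [div_self (ne_of_gt (hVolpos a))]
      simp
    · have h1 : ∀ i, w a i * w a' i = 0 := by
        intro i; rw [hwa, hwa]
        split_ifs with ha hb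
        · exact absurd (ha.symm.trans hb) h
        all_goals simp
      simp [h1, h]
  -- membership of the projection
  have hpmem : ∀ b, p b ∈ Submodule.span ℝ (Set.range w) := by
    intro b
    simp only [hp]
    exact Submodule.sum_mem _ fun a _ =>
      Submodule.smul_mem _ _ (Submodule.subset_span (Set.mem_range_self a))
  -- orthogonality
  have horth : ∀ b, ∀ y ∈ Submodule.span ℝ (Set.range w), ⟪v b - p b, y⟫ = 0 := by
    intro b y hy
    rw [Submodule.mem_span_range_iff_exists_fun] at hy
    obtain ⟨t, rfl⟩ := hy
    rw [inner_sum]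
    refine Finset.sum_eq_zero fun a _ => ?_
    rw [real_inner_smul_right]
    have hpw : ⟪p b, w a⟫ = c a b := by
      simp only [hp]
      rw [sum_inner]
      have h3 : ∀ a', ⟪c a' b • w a', w a⟫ = if a' = a then c a b else 0 := by
        intro a'
        rw [real_inner_smul_left, hww]
        split_ifs with h
        · subst h; ring
        · ring
      simp_rw [h3]
      simp
    have h0 : ⟪v b - p b, w a⟫ = 0 := by
      rw [inner_sub_left, hvw, hpw, sub_self]
    rw [h0, mul_zero]
  -- squared distance of v b to the span
  have hdist : ∀ b, (Metric.infDist (v b)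
      (Submodule.span ℝ (Set.range w) : Set (EuclideanSpace ℝ (Fin n)))) ^ 2
      = ∑ i, (v b i - p b i) ^ 2 := by
    intro b
    rw [infDist_eq_of_orth _ _ _ (hpmem b) (horth b)]
    rw [← real_inner_self_eq_norm_sq, hinnerE]
    refine Finset.sum_congr rfl fun i _ => ?_
    have h4 : (v b - p b) i = v b i - p b i := rfl
    rw [h4]; ring
  -- main computation
  have hstep : ∀ a, ∀ i ∈ Finset.univ.filter (fun i => f i = a),
      d i * (∑ b : Fin k, (X i b -
          (∑ j ∈ Finset.univ.filter (fun j => f j = a), d j * X j b) /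
            (∑ j ∈ Finset.univ.filter (fun j => f j = a), d j)) ^ 2)
        = ∑ b : Fin k, (v b i - p b i) ^ 2 := by
    intro a i hi
    have hfi : f i = a := (Finset.mem_filter.mp hi).2
    rw [Finset.mul_sum]
    refine Finset.sum_congr rfl fun b _ => ?_
    have hmm : (∑ j ∈ Finset.univ.filter (fun j => f j = a), d j * X j b) /
        (∑ j ∈ Finset.univ.filter (fun j => f j = a), d j) = m a b := rfl
    rw [hmm, hpcoord, hfi]
    have h5 : d i * (X i b - m a b) ^ 2 = (Real.sqrt (d i) * (X i b - m a b)) ^ 2 := by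
      rw [mul_pow, Real.sq_sqrt (hd i).le]
    rw [h5, mul_sub, hsX]
  calc Svar f
      = ∑ a : Fin k, ∑ i ∈ Finset.univ.filter (fun i => f i = a),
          ∑ b : Fin k, (v b i - p b i) ^ 2 := by
        rw [hSvar f]
        exact Finset.sum_congr rfl fun a _ => Finset.sum_congr rfl (hstep a)
    _ = ∑ i, ∑ b : Fin k, (v b i - p b i) ^ 2 :=
        Finset.sum_fiberwise _ _ _
    _ = ∑ b : Fin k, ∑ i, (v b i - p b i) ^ 2 := Finset.sum_comm
    _ = ∑ a : Fin k, (Metric.infDist (v a)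
          (Submodule.span ℝ (Set.range w) : Set (EuclideanSpace ℝ (Fin n)))) ^ 2 := by
        exact Finset.sum_congr rfl fun b _ => (hdist b).symm
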